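/- The map T : μ₂ × μ_{2(n-1)} × ℂ* → (ℂ*)^5 given by T(s, σ, τ) = (s σ^{-2} τ^{-2(k+1)}, σ τ^{kn+1}, s σ τ^{kn+1}, σ^2 τ^{2k}, τ^2) is a group homomorphism onto the group Γ_w = {(t0,…,t4) : t0 t1 t2 t3 t4 = t1^2 = t2^2 = t3^n t4 = t3 t4^{k(n-1)+1}}, and its kernel has order 2, namely {(1, τ^{-kn-1}, τ) : τ^2 = 1}. -/

import Mathlib

/-- The map `T(s, σ, τ) = (s σ⁻² τ^{-2(k+1)}, σ τ^{kn+1}, s σ τ^{kn+1}, σ² τ^{2k}, τ²)`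
for `w = x₁² + x₂² + x₃x₄(x₃^{n-1} + x₄^{k(n-1)})`. -/
noncomputable def CanT (n k : ℕ) (s σ τ : ℂˣ) : Fin 5 → ℂˣ :=
  ![s * σ ^ (-2 : ℤ) * τ ^ (-(2 * (k : ℤ) + 2)), σ * τ ^ (k * n + 1),
    s * σ * τ ^ (k * n + 1), σ ^ 2 * τ ^ (2 * k), τ ^ 2]

/-- The group `Γ_w` for `w = x₁² + x₂² + x₃x₄(x₃^{n-1} + x₄^{k(n-1)})`. -/
def CanGamma (n k : ℕ) : Set (Fin 5 → ℂˣ) :=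
  {t | t 0 * t 1 * t 2 * t 3 * t 4 = t 1 ^ 2 ∧
       t 1 ^ 2 = t 2 ^ 2 ∧
       t 2 ^ 2 = t 3 ^ n * t 4 ∧
       t 3 ^ n * t 4 = t 3 * t 4 ^ (k * (n - 1) + 1)}

open Additive in
private lemma can_units_sq_iff (τ : ℂˣ) : τ ^ 2 = 1 ↔ τ = 1 ∨ τ = -1 := by
  constructor
  · intro h
    have h' : (τ : ℂ) ^ 2 = 1 := by rw [← Units.val_pow_eq_pow_val, h, Units.val_one]
    rcases sq_eq_one_iff.mp h' with h'' | h''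
    · exact Or.inl (Units.ext (by simpa using h''))
    · exact Or.inr (Units.ext (by simpa using h''))
  · rintro (rfl | rfl)
    · exact one_pow 2
    · exact neg_one_sq

/-- `T : μ₂ × μ_{2(n-1)} × ℂ* → (ℂ*)⁵` is a group homomorphism onto `Γ_w`, with kernel
`{(1, τ^{-kn-1}, τ) : τ² = 1}` of order 2. -/
theorem can_T_surjective_two_to_one (n k : ℕ) (hn : 2 ≤ n) (hk : 1 ≤ k) :
    (∀ s σ τ s' σ' τ' : ℂˣ,
        CanT n k (s * s') (σ * σ') (τ * τ') = CanT n k s σ τ * CanT n k s' σ' τ') ∧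
    (∀ s σ τ : ℂˣ, s ^ 2 = 1 → σ ^ (2 * (n - 1)) = 1 → CanT n k s σ τ ∈ CanGamma n k) ∧
    (∀ t ∈ CanGamma n k, ∃ s σ τ : ℂˣ, s ^ 2 = 1 ∧ σ ^ (2 * (n - 1)) = 1 ∧
        CanT n k s σ τ = t) ∧
    {p : ℂˣ × ℂˣ × ℂˣ | p.1 ^ 2 = 1 ∧ p.2.1 ^ (2 * (n - 1)) = 1 ∧
        CanT n k p.1 p.2.1 p.2.2 = 1} =
      {p : ℂˣ × ℂˣ × ℂˣ | ∃ τ : ℂˣ, τ ^ 2 = 1 ∧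
        p = (1, τ ^ (-((k : ℤ) * n + 1)), τ)} ∧
    {p : ℂˣ × ℂˣ × ℂˣ | p.1 ^ 2 = 1 ∧ p.2.1 ^ (2 * (n - 1)) = 1 ∧
        CanT n k p.1 p.2.1 p.2.2 = 1}.ncard = 2 := by
  open Additive in
  obtain ⟨m, rfl⟩ : ∃ m, n = m + 2 := ⟨n - 2, by omega⟩
  have hker :
      {p : ℂˣ × ℂˣ × ℂˣ | p.1 ^ 2 = 1 ∧ p.2.1 ^ (2 * (m + 2 - 1)) = 1 ∧
          CanT (m+2) k p.1 p.2.1 p.2.2 = 1} =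
        {p : ℂˣ × ℂˣ × ℂˣ | ∃ τ : ℂˣ, τ ^ 2 = 1 ∧
          p = (1, τ ^ (-((k : ℤ) * (m+2) + 1)), τ)} := by
    ext ⟨s, σ, τ⟩
    simp only [Set.mem_setOf_eq]
    constructor
    · rintro ⟨hs, hσ, hT⟩
      have h4 : τ ^ 2 = 1 := by simpa [CanT] using congrFun hT 4
      have h1 : σ * τ ^ (k * (m+2) + 1) = 1 := by simpa [CanT] using congrFun hT 1
      have h2 : s * (σ * τ ^ (k * (m+2) + 1)) = 1 := by
        simpa [CanT, mul_assoc] using congrFun hT 2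
      rw [h1, mul_one] at h2
      refine ⟨τ, h4, ?_⟩
      have hσ' : σ = τ ^ (-((k : ℤ) * (m+2) + 1)) := by
        have : σ = (τ ^ (k * (m+2) + 1))⁻¹ := eq_inv_of_mul_eq_one_left h1
        rw [this, ← zpow_natCast τ (k * (m+2) + 1), ← zpow_neg]
        norm_num
      rw [h2, hσ']
    · rintro ⟨τ', hτ', hp⟩
      obtain ⟨rfl, rfl, rfl⟩ : s = 1 ∧ σ = τ' ^ (-((k : ℤ) * (m+2) + 1)) ∧ τ = τ' := by
        simpa [Prod.ext_iff] using hp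
      replace hτ' := congrArg Additive.ofMul hτ'
      simp only [ofMul_mul, ofMul_pow, ofMul_zpow, ofMul_one] at hτ'
      refine ⟨by rw [one_pow], ?_, ?_⟩
      · apply Additive.ofMul.injective
        simp only [show m+2-1 = m+1 from rfl, ofMul_mul, ofMul_pow, ofMul_zpow, ofMul_one]
        linear_combination (norm := module) (-((m:ℤ)+1)*((k:ℤ)*((m:ℤ)+2)+1)) • hτ'
      · funext i
        fin_cases i <;>
        · simp only [CanT, Pi.one_apply, Fin.isValue, Fin.zero_eta, Fin.mk_one,
            Matrix.cons_val_zero, Matrix.cons_val_one, Matrix.head_cons, Matrix.cons_val_two,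
            Matrix.tail_cons, Matrix.cons_val_three, Matrix.cons_val_four,
            show (⟨2,by norm_num⟩ : Fin 5) = 2 from rfl, show (⟨3,by norm_num⟩ : Fin 5) = 3 from rfl,
            show (⟨4,by norm_num⟩ : Fin 5) = 4 from rfl]
          apply Additive.ofMul.injective
          simp only [ofMul_mul, ofMul_pow, ofMul_zpow, ofMul_one]
          first
          | linear_combination (norm := module) ((k:ℤ)*((m:ℤ)+1)) • hτ'
          | module
          | linear_combination (norm := module) (-((k:ℤ)*((m:ℤ)+1)+1)) • hτ'
          | linear_combination (norm := module) hτ'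
  refine ⟨?_, ?_, ?_, hker, ?_⟩
  · -- group homomorphism
    intro s σ τ s' σ' τ'
    funext i
    fin_cases i <;>
    · simp only [CanT, Pi.mul_apply, Fin.isValue, Fin.zero_eta, Fin.mk_one,
        Matrix.cons_val_zero, Matrix.cons_val_one, Matrix.head_cons, Matrix.cons_val_two,
        Matrix.tail_cons, Matrix.cons_val_three, Matrix.cons_val_four,
        show (⟨2,by norm_num⟩ : Fin 5) = 2 from rfl, show (⟨3,by norm_num⟩ : Fin 5) = 3 from rfl,
        show (⟨4,by norm_num⟩ : Fin 5) = 4 from rfl]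
      apply Additive.ofMul.injective
      simp only [ofMul_mul, ofMul_pow, ofMul_zpow]
      module
  · -- lands in CanGamma
    intro s σ τ hs hσ
    simp only [show m+2-1 = m+1 from rfl] at hσ ⊢
    replace hs := congrArg Additive.ofMul hs
    replace hσ := congrArg Additive.ofMul hσ
    simp only [ofMul_mul, ofMul_pow, ofMul_zpow, ofMul_one] at hs hσ
    refine ⟨?_, ?_, ?_, ?_⟩ <;>
    · simp only [CanT, CanGamma, Set.mem_setOf_eq, Matrix.cons_val_zero, Matrix.cons_val_one,
        Matrix.head_cons, Matrix.cons_val_two, Matrix.tail_cons, Matrix.cons_val_three,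
        Matrix.cons_val_four, show (m+2)-1 = m+1 from rfl]
      apply Additive.ofMul.injective
      simp only [ofMul_mul, ofMul_pow, ofMul_zpow, ofMul_one]
      first
      | linear_combination (norm := module) hs
      | linear_combination (norm := module) -hs
      | linear_combination (norm := module) hs - hσ
      | linear_combination (norm := module) hσ
  · -- surjectivity
    intro t ht
    obtain ⟨h01, h12, h23, h34⟩ := ht
    obtain ⟨z, hz⟩ := IsAlgClosed.exists_pow_nat_eq (k := ℂ) (t 4 : ℂ) (n := 2) (by norm_num)
    have hz0 : z ≠ 0 := by
      intro h; apply (t 4).ne_zero; rw [← hz, h]; ring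
    set τ : ℂˣ := Units.mk0 z hz0 with hτdef
    have hτ : τ ^ 2 = t 4 := Units.ext (by simpa [hτdef] using hz)
    refine ⟨t 2 * (t 1)⁻¹, t 1 * τ ^ (-((k:ℤ)*(m+2)+1)), τ, ?_, ?_, ?_⟩
    · replace h12 := congrArg Additive.ofMul h12
      simp only [ofMul_mul, ofMul_pow, ofMul_zpow, ofMul_one] at h12
      apply Additive.ofMul.injective
      simp only [ofMul_mul, ofMul_pow, ofMul_zpow, ofMul_one, ofMul_inv]
      linear_combination (norm := module) -h12
    · replace h12 := congrArg Additive.ofMul h12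
      replace h23 := congrArg Additive.ofMul h23
      replace h34 := congrArg Additive.ofMul h34
      replace hτ := congrArg Additive.ofMul hτ
      simp only [ofMul_mul, ofMul_pow, ofMul_zpow, ofMul_one, show m+2-1 = m+1 from rfl] at *
      apply Additive.ofMul.injective
      simp only [ofMul_mul, ofMul_pow, ofMul_zpow, ofMul_one, ofMul_inv]
      linear_combination (norm := module) ((m:ℤ)+1) • h12 + ((m:ℤ)+1) • h23 + ((m:ℤ)+2) • h34
        - (((m:ℤ)+1)*((k:ℤ)*((m:ℤ)+2)+1)) • hτ
    · replace h01 := congrArg Additive.ofMul h01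
      replace h12 := congrArg Additive.ofMul h12
      replace h23 := congrArg Additive.ofMul h23
      replace h34 := congrArg Additive.ofMul h34
      replace hτ := congrArg Additive.ofMul hτ
      simp only [ofMul_mul, ofMul_pow, ofMul_zpow, ofMul_one, show m+2-1 = m+1 from rfl] at *
      funext i
      fin_cases i <;>
      · simp only [CanT, Pi.mul_apply, Fin.isValue, Fin.zero_eta, Fin.mk_one,
          Matrix.cons_val_zero, Matrix.cons_val_one, Matrix.head_cons, Matrix.cons_val_two,
          Matrix.tail_cons, Matrix.cons_val_three, Matrix.cons_val_four,
          show (⟨2,by norm_num⟩ : Fin 5) = 2 from rfl, show (⟨3,by norm_num⟩ : Fin 5) = 3 from rfl,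
          show (⟨4,by norm_num⟩ : Fin 5) = 4 from rfl]
        apply Additive.ofMul.injective
        simp only [ofMul_mul, ofMul_pow, ofMul_zpow, ofMul_one, ofMul_inv]
        first
        | linear_combination (norm := module) -h01 - (2:ℤ) • h12 - h23 - h34
            + ((k:ℤ)*((m:ℤ)+1)) • hτ
        | module
        | linear_combination (norm := module) h12 + h23 + h34 - ((k:ℤ)*((m:ℤ)+1)+1) • hτ
        | linear_combination (norm := module) hτ
  · -- cardinality
    rw [hker]
    have hpair : {p : ℂˣ × ℂˣ × ℂˣ | ∃ τ : ℂˣ, τ ^ 2 = 1 ∧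
          p = (1, τ ^ (-((k : ℤ) * (m+2) + 1)), τ)} =
        {((1:ℂˣ), (1:ℂˣ) ^ (-((k : ℤ) * (m+2) + 1)), (1:ℂˣ)),
         ((1:ℂˣ), (-1:ℂˣ) ^ (-((k : ℤ) * (m+2) + 1)), (-1:ℂˣ))} := by
      ext p
      simp only [Set.mem_setOf_eq, Set.mem_insert_iff, Set.mem_singleton_iff]
      constructor
      · rintro ⟨τ, hτ, rfl⟩
        rcases (can_units_sq_iff τ).mp hτ with rfl | rfl
        · exact Or.inl rfl
        · exact Or.inr rfl
      · rintro (rfl | rfl)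
        · exact ⟨1, one_pow 2, rfl⟩
        · exact ⟨-1, neg_one_sq, rfl⟩
    rw [hpair, Set.ncard_pair]
    intro h
    have h3 : (1 : ℂˣ) = -1 := congrArg (fun p => p.2.2) h
    have : (1 : ℂ) = -1 := by simpa using congrArg Units.val h3
    norm_num at this
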